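/- Let N be a real s × s matrix with N^k = 0 for a positive integer k, and let u : ℝ → ℝ^s be infinitely differentiable. If z : ℝ → ℝ^s is differentiable and satisfies N · z′(t) = −z(t) + u(t) for all t ∈ ℝ, then z is uniquely determined by u: for all t, z(t) = Σ_{i=0}^{k−1} (−1)^i · N^i · u^{(i)}(t), where u^{(i)} denotes the i-th derivative of u. -/

import Mathlib

/-- The purely algebraic subsystem `N z′ = −z + u` with `N` nilpotent
(`N^k = 0`) has the unique solution
`z(t) = Σ_{i=0}^{k−1} (−1)^i N^i u^{(i)}(t)`. -/
theorem algebraic_subsystem_solution_unique {s : ℕ} (k : ℕ) (hk : 0 < k)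
    (N : Matrix (Fin s) (Fin s) ℝ) (hN : N ^ k = 0)
    (u : ℝ → Fin s → ℝ) (hu : ContDiff ℝ (⊤ : ℕ∞) u)
    (z : ℝ → Fin s → ℝ) (hz : Differentiable ℝ z)
    (heq : ∀ t : ℝ, N.mulVec (deriv z t) = -z t + u t) :
    ∀ t : ℝ,
      z t = ∑ i ∈ Finset.range k,
        ((-1 : ℝ) ^ i) • (N ^ i).mulVec (iteratedDeriv i u t) := by
  -- continuous linear map for mulVec
  set L : Matrix (Fin s) (Fin s) ℝ → (Fin s → ℝ) →L[ℝ] (Fin s → ℝ) :=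
    fun M => LinearMap.toContinuousLinearMap (Matrix.mulVecLin M) with hL
  have hLapp : ∀ M v, L M v = M.mulVec v := fun M v => rfl
  -- derivatives of iterated derivs of u
  have hudiff : ∀ i : ℕ, ∀ t : ℝ,
      HasDerivAt (iteratedDeriv i u) (iteratedDeriv (i+1) u t) t := by
    intro i t
    rw [iteratedDeriv_succ]
    exact ((hu.differentiable_iteratedDeriv i (by exact_mod_cast WithTop.coe_lt_top i)) t).hasDerivAt.deriv ▸
      ((hu.differentiable_iteratedDeriv i (by exact_mod_cast WithTop.coe_lt_top i)) t).hasDerivAt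
  have key : ∀ d : ℕ, d ≤ k → ∀ t : ℝ,
      (N ^ (k - d)).mulVec (z t)
        = ∑ i ∈ Finset.range d,
            ((-1 : ℝ) ^ i) • (N ^ (k - d + i)).mulVec (iteratedDeriv i u t) := by
    intro d
    induction d with
    | zero =>
      intro _ t
      simp [hN, Matrix.zero_mulVec]
    | succ d ih =>
      intro hdk t
      have hd : d ≤ k := Nat.le_of_succ_le hdk
      set j := k - (d + 1) with hj
      have hjd : k - d = j + 1 := by omega
      -- IH rephrased
      have IH : ∀ t : ℝ, (N ^ (j+1)).mulVec (z t)
          = ∑ i ∈ Finset.range d,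
              ((-1 : ℝ) ^ i) • (N ^ (j + 1 + i)).mulVec (iteratedDeriv i u t) := by
        intro t; rw [← hjd]; exact ih hd t
      -- derivative of LHS
      have hA : ∀ t, HasDerivAt (fun t => (N ^ (j+1)).mulVec (z t))
          ((N ^ (j+1)).mulVec (deriv z t)) t := by
        intro t
        exact (L (N ^ (j+1))).hasFDerivAt.comp_hasDerivAt t ((hz t).hasDerivAt)
      -- derivative of RHS
      have hB : ∀ t, HasDerivAt
          (fun t => ∑ i ∈ Finset.range d,
              ((-1 : ℝ) ^ i) • (N ^ (j + 1 + i)).mulVec (iteratedDeriv i u t))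
          (∑ i ∈ Finset.range d,
              ((-1 : ℝ) ^ i) • (N ^ (j + 1 + i)).mulVec (iteratedDeriv (i+1) u t)) t := by
        intro t
        apply HasDerivAt.fun_sum
        intro i _
        exact (((L (N ^ (j+1+i))).hasFDerivAt.comp_hasDerivAt t (hudiff i t)).const_smul ((-1 : ℝ) ^ i))
      have hderiv : (N ^ (j+1)).mulVec (deriv z t)
          = ∑ i ∈ Finset.range d,
              ((-1 : ℝ) ^ i) • (N ^ (j + 1 + i)).mulVec (iteratedDeriv (i+1) u t) := by
        have hA' : HasDerivAt (fun t => ∑ i ∈ Finset.range d,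
              ((-1 : ℝ) ^ i) • (N ^ (j + 1 + i)).mulVec (iteratedDeriv i u t))
            ((N ^ (j+1)).mulVec (deriv z t)) t := by
          have := hA t
          simpa [funext IH] using this
        exact hA'.unique (hB t)
      -- apply N^j to heq
      have hmain : (N ^ (j+1)).mulVec (deriv z t)
          = -(N ^ j).mulVec (z t) + (N ^ j).mulVec (u t) := by
        have := congrArg (fun v => (N ^ j).mulVec v) (heq t)
        simpa [Matrix.mulVec_mulVec, pow_succ, Matrix.mulVec_add, Matrix.mulVec_neg] using this
      have hz' : (N ^ j).mulVec (z t)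
          = (N ^ j).mulVec (u t) - (N ^ (j+1)).mulVec (deriv z t) := by
        rw [hmain]; abel
      rw [hjd] at *
      rw [hz', hderiv, Finset.sum_range_succ']
      simp only [pow_zero, one_smul, add_zero, pow_succ]
      rw [sub_eq_iff_eq_add]
      rw [add_comm]
      congr 1
      have hterm : ∀ x ∈ Finset.range d,
          ((-1:ℝ)^x * -1) • (N ^ (j+(x+1))).mulVec (iteratedDeriv (x+1) u t)
            = -(((-1:ℝ)^x) • (N ^ (j+1+x)).mulVec (iteratedDeriv (x+1) u t)) := by
        intro x _
        rw [show j+(x+1)=j+1+x by ring, mul_neg_one, neg_smul]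
      rw [Finset.sum_congr rfl hterm, Finset.sum_neg_distrib, iteratedDeriv_zero]
      abel
    
  intro t
  have := key k le_rfl t
  simpa [Nat.sub_self, Matrix.one_mulVec] using this
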